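/- Screening test validity (nonzero branch): if for some u ∈ ℝ^m and ℓ ∈ S̄ one has D^ν(u) + π¹_ℓ(u) > p̄ with p̄ ≥ p*, then the optimal value of the node sub-problem at ν¹ = (S₀, S₁ ∪ {ℓ}, S̄ \ {ℓ}) exceeds p*, so no minimizer of the full problem satisfies the constraints of ν¹. -/

import Mathlib

/-- Pivot value πᵢ(u) = M(|aᵢᵀu| − λ/M). -/
noncomputable def piv {m n : ℕ} (A : Fin m → Fin n → ℝ) (lam M : ℝ)
    (i : Fin n) (u : Fin m → ℝ) : ℝ :=
  M * (|∑ j, A j i * u j| - lam / M)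

/-- Pivot value π⁰ᵢ(u) = M·max(0, |aᵢᵀu| − λ/M). -/
noncomputable def piv0 {m n : ℕ} (A : Fin m → Fin n → ℝ) (lam M : ℝ)
    (i : Fin n) (u : Fin m → ℝ) : ℝ :=
  M * max 0 (|∑ j, A j i * u j| - lam / M)

/-- Pivot value π¹ᵢ(u) = M·max(0, λ/M − |aᵢᵀu|). -/
noncomputable def piv1 {m n : ℕ} (A : Fin m → Fin n → ℝ) (lam M : ℝ)
    (i : Fin n) (u : Fin m → ℝ) : ℝ :=
  M * max 0 (lam / M - |∑ j, A j i * u j|)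

/-- Dual objective D^ν(u) of the ℓ₁-relaxation at node ν = (S₀, S₁, S̄). -/
noncomputable def dualObj {m n : ℕ} (A : Fin m → Fin n → ℝ) (y : Fin m → ℝ)
    (lam M : ℝ) (S1 Sbar : Finset (Fin n)) (u : Fin m → ℝ) : ℝ :=
  (1/2) * ∑ j, (y j)^2 - (1/2) * ∑ j, (y j - u j)^2
    - ∑ i ∈ Sbar, piv0 A lam M i u - ∑ i ∈ S1, piv A lam M i u

/-- Values of the full ℓ₀-penalized problem over the box ‖x‖∞ ≤ M. -/
noncomputable def fullSet {m n : ℕ} (A : Fin m → Fin n → ℝ) (y : Fin m → ℝ)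
    (lam M : ℝ) : Set ℝ :=
  {c | ∃ x : Fin n → ℝ, (∀ i, |x i| ≤ M) ∧
    c = (1/2) * ∑ j, (y j - ∑ i, A j i * x i)^2
          + lam * ((Finset.univ.filter fun i => x i ≠ 0).card : ℝ)}

/-- Values of the node sub-problem at node ν = (S₀, S₁, S̄). -/
noncomputable def nodeSet {m n : ℕ} (A : Fin m → Fin n → ℝ) (y : Fin m → ℝ)
    (lam M : ℝ) (S0 S1 Sbar : Finset (Fin n)) : Set ℝ :=
  {c | ∃ x : Fin n → ℝ, (∀ i, |x i| ≤ M) ∧ (∀ i ∈ S0, x i = 0) ∧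
    c = (1/2) * ∑ j, (y j - ∑ i, A j i * x i)^2
          + lam * ((Sbar.filter fun i => x i ≠ 0).card : ℝ) + lam * S1.card}

lemma piv0_nonneg {m n : ℕ} (A : Fin m → Fin n → ℝ) {M : ℝ} (lam : ℝ)
    (hM : 0 < M) (i : Fin n) (u : Fin m → ℝ) : 0 ≤ piv0 A lam M i u := by
  unfold piv0
  positivity

lemma xv_le {x v lam M : ℝ} (hlam : 0 < lam) (hM : 0 < M) (hx : |x| ≤ M) :
    x * v ≤ lam + M * max 0 (|v| - lam / M) := by
  have h1 : x * v ≤ M * |v| := by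
    calc x * v ≤ |x * v| := le_abs_self _
    _ = |x| * |v| := abs_mul _ _
    _ ≤ M * |v| := mul_le_mul_of_nonneg_right hx (abs_nonneg _)
  have h2 : M * (|v| - lam / M) ≤ M * max 0 (|v| - lam / M) :=
    mul_le_mul_of_nonneg_left (le_max_right _ _) hM.le
  have hMne : M ≠ 0 := hM.ne'
  have : M * (|v| - lam / M) = M * |v| - lam := by field_simp
  linarith

/-- Weak duality for the node sub-problem. -/
lemma weak_duality {m n : ℕ} (A : Fin m → Fin n → ℝ) (y : Fin m → ℝ)
    {lam M : ℝ} (hlam : 0 < lam) (hM : 0 < M)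
    (S0 S1 Sbar : Finset (Fin n))
    (hcover : S0 ∪ S1 ∪ Sbar = Finset.univ)
    (h01 : Disjoint S0 S1) (h0b : Disjoint S0 Sbar) (h1b : Disjoint S1 Sbar)
    (u : Fin m → ℝ) (x : Fin n → ℝ) (hx : ∀ i, |x i| ≤ M)
    (hx0 : ∀ i ∈ S0, x i = 0) :
    dualObj A y lam M S1 Sbar u ≤
      (1/2) * ∑ j, (y j - ∑ i, A j i * x i)^2
        + lam * ((Sbar.filter fun i => x i ≠ 0).card : ℝ) + lam * S1.card := by
  set v : Fin n → ℝ := fun i => ∑ j, A j i * u j with hv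
  set w : Fin m → ℝ := fun j => ∑ i, A j i * x i with hw
  have hswap : ∑ i, x i * v i = ∑ j, u j * w j := by
    simp only [hv, hw, Finset.mul_sum]
    rw [Finset.sum_comm]
    apply Finset.sum_congr rfl; intro j _
    apply Finset.sum_congr rfl; intro i _; ring
  have key : (1/2) * ∑ j, (y j)^2 - (1/2) * ∑ j, (y j - u j)^2 ≤
      (1/2) * ∑ j, (y j - w j)^2 + ∑ j, u j * w j := by
    have h : ∀ j ∈ Finset.univ, (y j)^2 - (y j - u j)^2 ≤
        (y j - w j)^2 + 2 * (u j * w j) := by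
      intro j _
      nlinarith [sq_nonneg (y j - u j - w j)]
    have := Finset.sum_le_sum h
    simp only [Finset.sum_sub_distrib, Finset.sum_add_distrib, ← Finset.mul_sum] at this
    linarith
  -- bound ∑ x i * v i
  have hsplit : ∑ i, x i * v i =
      (∑ i ∈ S0, x i * v i) + (∑ i ∈ S1, x i * v i) + ∑ i ∈ Sbar, x i * v i := by
    rw [← hcover, Finset.sum_union (by
      rw [Finset.disjoint_union_left]; exact ⟨h0b, h1b⟩), Finset.sum_union h01]
  have hS0 : ∑ i ∈ S0, x i * v i = 0 :=
    Finset.sum_eq_zero fun i hi => by rw [hx0 i hi]; ring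
  have hS1 : ∑ i ∈ S1, x i * v i ≤ (∑ i ∈ S1, piv A lam M i u) + lam * S1.card := by
    have h : ∀ i ∈ S1, x i * v i ≤ piv A lam M i u + lam := by
      intro i _
      have := xv_le hlam hM (hx i) (v := v i)
      have hMne : M ≠ 0 := hM.ne'
      have hpp : piv A lam M i u + lam = M * |v i| := by
        unfold piv; field_simp; ring
      have h2 : M * max 0 (|v i| - lam / M) ≥ M * (|v i| - lam / M) :=
        mul_le_mul_of_nonneg_left (le_max_right _ _) hM.le
      have h3 : M * (|v i| - lam / M) = M * |v i| - lam := by field_simp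
      -- x i * v i ≤ M |v i|
      have h1 : x i * v i ≤ M * |v i| := by
        calc x i * v i ≤ |x i * v i| := le_abs_self _
        _ = |x i| * |v i| := abs_mul _ _
        _ ≤ M * |v i| := mul_le_mul_of_nonneg_right (hx i) (abs_nonneg _)
      linarith
    calc ∑ i ∈ S1, x i * v i ≤ ∑ i ∈ S1, (piv A lam M i u + lam) :=
          Finset.sum_le_sum h
    _ = (∑ i ∈ S1, piv A lam M i u) + lam * S1.card := by
        rw [Finset.sum_add_distrib]; simp [mul_comm]
  have hSb : ∑ i ∈ Sbar, x i * v i ≤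
      (∑ i ∈ Sbar, piv0 A lam M i u) + lam * ((Sbar.filter fun i => x i ≠ 0).card : ℝ) := by
    have h : ∀ i ∈ Sbar, x i * v i ≤
        piv0 A lam M i u + (if x i ≠ 0 then lam else 0) := by
      intro i _
      by_cases hxi : x i = 0
      · simp only [hxi, ne_eq, not_true_eq_false, if_false, zero_mul, add_zero]
        exact piv0_nonneg A lam hM i u
      · simp only [ne_eq, hxi, not_false_eq_true, if_true]
        have := xv_le hlam hM (hx i) (v := v i)
        unfold piv0; linarith
    calc ∑ i ∈ Sbar, x i * v i
        ≤ ∑ i ∈ Sbar, (piv0 A lam M i u + if x i ≠ 0 then lam else 0) :=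
          Finset.sum_le_sum h
    _ = (∑ i ∈ Sbar, piv0 A lam M i u)
          + lam * ((Sbar.filter fun i => x i ≠ 0).card : ℝ) := by
        rw [Finset.sum_add_distrib, Finset.sum_ite, Finset.sum_const,
          Finset.sum_const]
        simp [mul_comm]
  unfold dualObj
  have hbound : ∑ j, u j * w j ≤ (∑ i ∈ S1, piv A lam M i u) + lam * S1.card
      + ((∑ i ∈ Sbar, piv0 A lam M i u)
        + lam * ((Sbar.filter fun i => x i ≠ 0).card : ℝ)) := by
    rw [← hswap, hsplit]
    linarith
  linarith

/-- Node-screening test validity (nonzero branch): if D^ν(u) + π¹_ℓ(u) > p̄ ≥ p*,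
then the optimal value of the node sub-problem at ν¹ = (S₀, S₁ ∪ {ℓ}, S̄ ∖ {ℓ})
exceeds p*; hence no minimizer of the full problem satisfies the constraints
of ν¹. -/
theorem screening_one_branch {m n : ℕ} (A : Fin m → Fin n → ℝ) (y : Fin m → ℝ)
    (lam M : ℝ) (hlam : 0 < lam) (hM : 0 < M)
    (S0 S1 Sbar : Finset (Fin n))
    (hcover : S0 ∪ S1 ∪ Sbar = Finset.univ)
    (h01 : Disjoint S0 S1) (h0b : Disjoint S0 Sbar) (h1b : Disjoint S1 Sbar)
    (l : Fin n) (hl : l ∈ Sbar) (u : Fin m → ℝ) (pbar : ℝ)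
    (hpbar : sInf (fullSet A y lam M) ≤ pbar)
    (htest : dualObj A y lam M S1 Sbar u + piv1 A lam M l u > pbar) :
    sInf (nodeSet A y lam M S0 (insert l S1) (Sbar.erase l))
        > sInf (fullSet A y lam M) ∧
    ∀ x : Fin n → ℝ, (∀ i, |x i| ≤ M) → (∀ i ∈ S0, x i = 0) →
      (∀ i ∈ insert l S1, x i ≠ 0) →
      (1/2) * ∑ j, (y j - ∑ i, A j i * x i)^2
          + lam * ((Finset.univ.filter fun i => x i ≠ 0).card : ℝ)
        > sInf (fullSet A y lam M) := by
  have hlnot1 : l ∉ S1 := fun h => (Finset.disjoint_left.mp h1b h) hl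
  -- the new node data
  have hcover' : S0 ∪ insert l S1 ∪ Sbar.erase l = Finset.univ := by
    rw [← hcover]
    ext i
    simp only [Finset.mem_union, Finset.mem_insert, Finset.mem_erase]
    by_cases hi : i = l
    · subst hi; tauto
    · tauto
  have h01' : Disjoint S0 (insert l S1) := by
    rw [Finset.disjoint_insert_right]
    exact ⟨fun h => (Finset.disjoint_left.mp h0b h) hl, h01⟩
  have h0b' : Disjoint S0 (Sbar.erase l) :=
    h0b.mono_right (Finset.erase_subset _ _)
  have h1b' : Disjoint (insert l S1) (Sbar.erase l) := by
    rw [Finset.disjoint_insert_left]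
    exact ⟨Finset.notMem_erase _ _, h1b.mono_right (Finset.erase_subset _ _)⟩
  -- dual identity
  have hdual : dualObj A y lam M (insert l S1) (Sbar.erase l) u
      = dualObj A y lam M S1 Sbar u + piv1 A lam M l u := by
    unfold dualObj
    rw [Finset.sum_insert hlnot1, ← Finset.add_sum_erase _ _ hl]
    have : piv1 A lam M l u = piv0 A lam M l u - piv A lam M l u := by
      unfold piv piv0 piv1
      rcases le_total 0 (|∑ j, A j l * u j| - lam / M) with h | h
      · rw [max_eq_right h, max_eq_left (by linarith)]; ring
      · rw [max_eq_left h, max_eq_right (by linarith)]; ring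
    linarith
  -- weak duality bound for new node
  have hwd : ∀ c ∈ nodeSet A y lam M S0 (insert l S1) (Sbar.erase l),
      dualObj A y lam M (insert l S1) (Sbar.erase l) u ≤ c := by
    rintro c ⟨x, hx, hx0, rfl⟩
    exact weak_duality A y hlam hM S0 (insert l S1) (Sbar.erase l)
      hcover' h01' h0b' h1b' u x hx hx0
  have hne : (nodeSet A y lam M S0 (insert l S1) (Sbar.erase l)).Nonempty := by
    refine ⟨_, fun _ => 0, fun i => by simp [hM.le], fun i _ => rfl, rfl⟩
  have hbdd : BddBelow (nodeSet A y lam M S0 (insert l S1) (Sbar.erase l)) :=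
    ⟨_, hwd⟩
  have hInf : dualObj A y lam M (insert l S1) (Sbar.erase l) u
      ≤ sInf (nodeSet A y lam M S0 (insert l S1) (Sbar.erase l)) :=
    le_csInf hne hwd
  have hmain : sInf (nodeSet A y lam M S0 (insert l S1) (Sbar.erase l))
      > sInf (fullSet A y lam M) := by
    rw [hdual] at hInf
    linarith
  refine ⟨hmain, ?_⟩
  intro x hx hx0 hxnz
  -- the full objective value of x equals its new-node objective value
  have hcount : ((Finset.univ.filter fun i => x i ≠ 0).card : ℝ)
      = (((Sbar.erase l).filter fun i => x i ≠ 0).card : ℝ)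
        + ((insert l S1).card : ℝ) := by
    have hfilter : Finset.univ.filter (fun i => x i ≠ 0)
        = (S1 ∪ Sbar).filter (fun i => x i ≠ 0) := by
      ext i
      simp only [Finset.mem_filter, Finset.mem_union, Finset.mem_univ, true_and]
      constructor
      · rintro hne
        have : i ∈ S0 ∪ S1 ∪ Sbar := hcover ▸ Finset.mem_univ i
        rcases Finset.mem_union.mp this with h | h
        · rcases Finset.mem_union.mp h with h | h
          · exact (hne (hx0 i h)).elim
          · exact ⟨Or.inl h, hne⟩
        · exact ⟨Or.inr h, hne⟩
      · exact fun h => h.2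
    have hS1f : S1.filter (fun i => x i ≠ 0) = S1 :=
      Finset.filter_true_of_mem fun i hi => hxnz i (Finset.mem_insert_of_mem hi)
    have hSbf : Sbar.filter (fun i => x i ≠ 0)
        = insert l ((Sbar.erase l).filter fun i => x i ≠ 0) := by
      conv_lhs => rw [← Finset.insert_erase hl]
      rw [Finset.filter_insert, if_pos (hxnz l (Finset.mem_insert_self _ _))]
    have hdisj : Disjoint (S1.filter fun i => x i ≠ 0)
        (Sbar.filter fun i => x i ≠ 0) :=
      (h1b.mono (Finset.filter_subset _ _) (Finset.filter_subset _ _))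
    have hlni : l ∉ (Sbar.erase l).filter fun i => x i ≠ 0 := by
      simp [Finset.mem_filter]
    rw [hfilter, Finset.filter_union, Finset.card_union_of_disjoint hdisj,
      hS1f, hSbf, Finset.card_insert_of_notMem hlni,
      Finset.card_insert_of_notMem hlnot1]
    push_cast
    ring
  have hmem : (1/2) * ∑ j, (y j - ∑ i, A j i * x i)^2
      + lam * ((Finset.univ.filter fun i => x i ≠ 0).card : ℝ)
      ∈ nodeSet A y lam M S0 (insert l S1) (Sbar.erase l) := by
    refine ⟨x, hx, hx0, ?_⟩
    rw [hcount]
    ring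
  calc sInf (fullSet A y lam M)
      < sInf (nodeSet A y lam M S0 (insert l S1) (Sbar.erase l)) := hmain
  _ ≤ _ := csInf_le hbdd hmem
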